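/- Two-axis outer independence construction: let Y = (Y_A, Y_C) have support Ω = (L_A^2 × {0_C}) ∪ ({0_A} × L_C^2) with α = P(Y_A ∈ L_A^2, Y_C = 0_C) ∈ (0,1). Choose p_A, p_C ∈ (0,1) with α = p_A(1−p_C)/(p_A(1−p_C)+(1−p_A)p_C). Define independent W_A, W_C with CDFs F_{W_A}(w_A) = (1−p_A)P(U_A ≤ w_A) on L_A^1 and (1−p_A) + p_A P(Y_A ≤ w_A | Y_A ∈ L_A^2, Y_C = 0_C) on L_A^2, and analogously for W_C with uniform U_C and weight p_C. Then the conditional law of W = (W_A, W_C) given W ∈ Ω equals the law of Y; hence Y_A ⫫_o Y_C. -/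

import Mathlib

open MeasureTheory ProbabilityTheory Set
open scoped ENNReal

noncomputable section

/-- `L^1 = [0,1]^ι`. -/
def box1 (ι : Type*) : Set (ι → ℝ) := {x | ∀ i, x i ∈ Set.Icc (0:ℝ) 1}

/-- `L^2 = [0,∞)^ι \ [0,1]^ι`. -/
def box2 (ι : Type*) : Set (ι → ℝ) := {x | ∀ i, 0 ≤ x i} \ box1 ι

/-- The two-axis set `Ω = (L_A^2 × {0_C}) ∪ ({0_A} × L_C^2)`. -/
def omAxes (ιA ιC : Type*) : Set ((ιA → ℝ) × (ιC → ℝ)) :=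
  (box2 ιA ×ˢ ({fun _ => 0} : Set (ιC → ℝ))) ∪ (({fun _ => 0} : Set (ιA → ℝ)) ×ˢ box2 ιC)

/-- the topological support of `ν` is `S`. -/
def HasSupport {γ : Type*} [MeasurableSpace γ] [TopologicalSpace γ]
    (ν : Measure γ) (S : Set γ) : Prop :=
  ν Sᶜ = 0 ∧ ∀ U : Set γ, IsOpen U → (U ∩ S).Nonempty → 0 < ν U

/-- outer independence. -/
def OuterIndep {Ω₀ : Type} [MeasurableSpace Ω₀] (μ : Measure Ω₀)
    {α β : Type} [MeasurableSpace α] [MeasurableSpace β]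
    (YA : Ω₀ → α) (YC : Ω₀ → β) (Om : Set (α × β)) : Prop :=
  ∃ (Ω' : Type) (_ : MeasurableSpace Ω') (P : Measure Ω') (WA : Ω' → α) (WC : Ω' → β)
    (LA : Set α) (LC : Set β),
    IsProbabilityMeasure P ∧ Measurable WA ∧ Measurable WC ∧
    Om ⊆ LA ×ˢ LC ∧
    P ((fun ω => (WA ω, WC ω)) ⁻¹' (LA ×ˢ LC)) = 1 ∧
    IndepFun WA WC P ∧
    (P[|(fun ω => (WA ω, WC ω)) ⁻¹' Om]).map (fun ω => (WA ω, WC ω)) =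
      μ.map (fun ω => (YA ω, YC ω))

lemma measurableSet_box1 (ι : Type*) [Countable ι] : MeasurableSet (box1 ι) := by
  have h : box1 ι = Set.pi Set.univ (fun _ => Set.Icc (0:ℝ) 1) := by
    ext x; simp [box1, Set.mem_pi, Pi.le_def, forall_and]
  rw [h]; exact MeasurableSet.univ_pi fun i => measurableSet_Icc

lemma measurableSet_box2 (ι : Type*) [Countable ι] : MeasurableSet (box2 ι) := by
  have h : MeasurableSet {x : ι → ℝ | ∀ i, 0 ≤ x i} := by
    have e : {x : ι → ℝ | ∀ i, 0 ≤ x i} = Set.pi Set.univ (fun _ => Set.Ici (0:ℝ)) := by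
      ext x; simp [Set.mem_pi, Pi.le_def]
    rw [e]; exact MeasurableSet.univ_pi fun i => measurableSet_Ici
  exact h.diff (measurableSet_box1 ι)

lemma zero_not_mem_box2 (ι : Type*) : (fun _ => 0 : ι → ℝ) ∉ box2 ι :=
  fun h => h.2 (fun _ => ⟨le_refl 0, zero_le_one⟩)

lemma prod_smul_smul {α β : Type*} [MeasurableSpace α] [MeasurableSpace β]
    (c d : ℝ≥0∞) (hd : d ≠ ∞) (μ : Measure α) (ν : Measure β) [SFinite μ] [SFinite ν] :
    (c • μ).prod (d • ν) = (c * d) • μ.prod ν := by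
  ext s hs
  rw [Measure.smul_apply, Measure.prod_apply hs, Measure.prod_apply hs,
    MeasureTheory.lintegral_smul_measure]
  simp only [Measure.smul_apply, smul_eq_mul]
  rw [MeasureTheory.lintegral_const_mul' _ _ hd, mul_assoc]

/-- two-axis outer independence construction: with `Y` supported on the two
axes, `α = P(Y_A ∈ L_A^2, Y_C = 0) ∈ (0,1)` and `p_A, p_C ∈ (0,1)` matched so that
`α = p_A(1-p_C)/(p_A(1-p_C)+(1-p_A)p_C)`, the independent coupling `W = (W_A, W_C)` with
marginals mixing a uniform law on `L^1` (weight `1-p`) with the conditional law of the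
corresponding axis (weight `p`) satisfies: the (density-version) conditional law of `W` given
`W ∈ Ω` — the normalized sum of the two axis contributions with the density-at-zero weights —
equals the law of `Y`; hence `Y_A ⫫ₒ Y_C`. -/
theorem stmt13 {Ω₀ ιA ιC : Type} [MeasurableSpace Ω₀] [Fintype ιA] [Fintype ιC]
    [Nonempty ιA] [Nonempty ιC]
    (μ : Measure Ω₀) [IsProbabilityMeasure μ]
    (YA : Ω₀ → ιA → ℝ) (YC : Ω₀ → ιC → ℝ)
    (hA : Measurable YA) (hC : Measurable YC)
    (hsupp : HasSupport (μ.map fun ω => (YA ω, YC ω)) (omAxes ιA ιC))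
    (a pA pC : ℝ)
    (ha0 : 0 < a) (ha1 : a < 1)
    (hpA : pA ∈ Set.Ioo (0:ℝ) 1) (hpC : pC ∈ Set.Ioo (0:ℝ) 1)
    (haxis : μ {ω | YA ω ∈ box2 ιA ∧ YC ω = fun _ => 0} = ENNReal.ofReal a)
    (hmatch : a = pA * (1 - pC) / (pA * (1 - pC) + (1 - pA) * pC))
    (νA : Measure (ιA → ℝ)) (νC : Measure (ιC → ℝ))
    (hνA : νA =
      (ENNReal.ofReal (1 - pA)) • (Measure.pi fun _ : ιA => volume.restrict (Set.Icc (0:ℝ) 1)) +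
      (ENNReal.ofReal pA) • ((μ[|{ω | YA ω ∈ box2 ιA ∧ YC ω = fun _ => 0}]).map YA))
    (hνC : νC =
      (ENNReal.ofReal (1 - pC)) • (Measure.pi fun _ : ιC => volume.restrict (Set.Icc (0:ℝ) 1)) +
      (ENNReal.ofReal pC) • ((μ[|{ω | YA ω = (fun _ => 0) ∧ YC ω ∈ box2 ιC}]).map YC)) :
    ((ENNReal.ofReal (pA * (1 - pC) + (1 - pA) * pC))⁻¹ •
      ((ENNReal.ofReal (1 - pC)) •
          ((νA.restrict (box2 ιA)).map fun x => (x, (fun _ => 0 : ιC → ℝ))) +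
        (ENNReal.ofReal (1 - pA)) •
          ((νC.restrict (box2 ιC)).map fun y => ((fun _ => 0 : ιA → ℝ), y))) =
      μ.map fun ω => (YA ω, YC ω)) ∧
    OuterIndep μ YA YC (omAxes ιA ιC) := by
  obtain ⟨hpA0, hpA1⟩ := hpA
  obtain ⟨hpC0, hpC1⟩ := hpC
  set EA : Set Ω₀ := {ω | YA ω ∈ box2 ιA ∧ YC ω = fun _ => 0} with hEAdef
  set EC : Set Ω₀ := {ω | YA ω = (fun _ => 0) ∧ YC ω ∈ box2 ιC} with hECdef
  set f : Ω₀ → (ιA → ℝ) × (ιC → ℝ) := fun ω => (YA ω, YC ω) with hfdef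
  have hf : Measurable f := hA.prodMk hC
  set c : ℝ := pA * (1 - pC) + (1 - pA) * pC with hcdef
  have hc0 : 0 < c := by nlinarith
  have hcne : ENNReal.ofReal c ≠ 0 := by
    simp [ENNReal.ofReal_eq_zero, not_le, hc0]
  have hane : ENNReal.ofReal a ≠ 0 := by
    simp [ENNReal.ofReal_eq_zero, not_le, ha0]
  have ha'ne : ENNReal.ofReal (1 - a) ≠ 0 := by
    simp [ENNReal.ofReal_eq_zero, not_le]; linarith
  -- real identities
  have hac : pA * (1 - pC) = a * c := by
    field_simp at hmatch; linarith [hmatch]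
  have ha'c : (1 - pA) * pC = (1 - a) * c := by nlinarith [hac]
  -- measurability
  have mEA : MeasurableSet EA :=
    (hA (measurableSet_box2 ιA)).inter (hC (measurableSet_singleton _))
  have mEC : MeasurableSet EC :=
    (hA (measurableSet_singleton _)).inter (hC (measurableSet_box2 ιC))
  have mOm : MeasurableSet (omAxes ιA ιC) :=
    ((measurableSet_box2 ιA).prod (measurableSet_singleton _)).union
      ((measurableSet_singleton _).prod (measurableSet_box2 ιC))
  -- disjointness and full measure
  have hdisj : Disjoint EA EC := by
    rw [Set.disjoint_left]
    rintro ω ⟨h1, -⟩ ⟨h2, -⟩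
    exact zero_not_mem_box2 ιA (h2 ▸ h1)
  have hpre : f ⁻¹' (omAxes ιA ιC) = EA ∪ EC := by
    ext ω
    simp only [Set.mem_preimage, omAxes, Set.mem_union, Set.mem_prod, Set.mem_singleton_iff,
      hEAdef, hECdef, Set.mem_setOf_eq]
    exact Iff.rfl
  have hcompl0 : μ (EA ∪ EC)ᶜ = 0 := by
    have h := hsupp.1
    rw [Measure.map_apply hf mOm.compl, Set.preimage_compl, hpre] at h
    exact h
  have hfull : ∀ᵐ ω ∂μ, ω ∈ EA ∪ EC := by
    rw [ae_iff]
    exact hcompl0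
  have hμEC : μ EC = ENNReal.ofReal (1 - a) := by
    have h1 : μ (EA ∪ EC) = 1 := by
      have := measure_add_measure_compl (μ := μ) (mEA.union mEC)
      rw [hcompl0, add_zero, measure_univ] at this; exact this
    rw [measure_union hdisj mEC, haxis] at h1
    have h2 : ENNReal.ofReal a + ENNReal.ofReal (1 - a) = 1 := by
      rw [← ENNReal.ofReal_add ha0.le (by linarith)]
      norm_num
    rw [← h2] at h1
    exact (ENNReal.add_right_inj ENNReal.ofReal_ne_top).mp h1
  -- probability instances
  haveI hPA : IsProbabilityMeasure (μ[|EA]) :=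
    cond_isProbabilityMeasure (by rw [haxis]; exact hane)
  haveI hPC : IsProbabilityMeasure (μ[|EC]) :=
    cond_isProbabilityMeasure (by rw [hμEC]; exact ha'ne)
  set κA : Measure (ιA → ℝ) := (μ[|EA]).map YA with hκA
  set κC : Measure (ιC → ℝ) := (μ[|EC]).map YC with hκC
  haveI : IsProbabilityMeasure κA := Measure.isProbabilityMeasure_map hA.aemeasurable
  haveI : IsProbabilityMeasure κC := Measure.isProbabilityMeasure_map hC.aemeasurable
  -- cond measures live on their events
  have haeA : ∀ᵐ ω ∂(μ[|EA]), ω ∈ EA := by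
    rw [ae_iff]
    have h : μ[|EA] EAᶜ = 0 := by
      rw [cond_apply mEA]; simp
    exact h
  have haeC : ∀ᵐ ω ∂(μ[|EC]), ω ∈ EC := by
    rw [ae_iff]
    have h : μ[|EC] ECᶜ = 0 := by
      rw [cond_apply mEC]; simp
    exact h
  -- κA lives on box2
  have hκAbox : κA (box2 ιA)ᶜ = 0 := by
    rw [hκA, Measure.map_apply hA (measurableSet_box2 ιA).compl]
    refine measure_mono_null ?_ (by rw [ae_iff] at haeA; exact haeA)
    intro ω hω hmem
    exact hω hmem.1
  have hκCbox : κC (box2 ιC)ᶜ = 0 := by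
    rw [hκC, Measure.map_apply hC (measurableSet_box2 ιC).compl]
    refine measure_mono_null ?_ (by rw [ae_iff] at haeC; exact haeC)
    intro ω hω hmem
    exact hω hmem.2
  have hκArestrict : κA.restrict (box2 ιA) = κA := by
    rw [Measure.restrict_congr_set (Filter.eventuallyEq_univ.mpr (mem_ae_iff.mpr hκAbox)),
      Measure.restrict_univ]
  have hκCrestrict : κC.restrict (box2 ιC) = κC := by
    rw [Measure.restrict_congr_set (Filter.eventuallyEq_univ.mpr (mem_ae_iff.mpr hκCbox)),
      Measure.restrict_univ]
  -- embeddings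
  set gA : (ιA → ℝ) → (ιA → ℝ) × (ιC → ℝ) := fun x => (x, fun _ => 0) with hgA
  set gC : (ιC → ℝ) → (ιA → ℝ) × (ιC → ℝ) := fun y => ((fun _ => 0), y) with hgC
  have hgAm : Measurable gA := measurable_id.prodMk measurable_const
  have hgCm : Measurable gC := measurable_const.prodMk measurable_id
  -- the two axis contributions are conditional laws of f
  have hmapA : κA.map gA = (μ[|EA]).map f := by
    rw [hκA, Measure.map_map hgAm hA]
    refine Measure.map_congr ?_
    filter_upwards [haeA] with ω hω
    show (YA ω, (fun _ => 0 : ιC → ℝ)) = (YA ω, YC ω)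
    rw [hω.2]
  have hmapC : κC.map gC = (μ[|EC]).map f := by
    rw [hκC, Measure.map_map hgCm hC]
    refine Measure.map_congr ?_
    filter_upwards [haeC] with ω hω
    show ((fun _ => 0 : ιA → ℝ), YC ω) = (YA ω, YC ω)
    rw [hω.1]
  -- key identity
  have hKA : (ENNReal.ofReal (pA * (1 - pC))) • κA.map gA =
      ENNReal.ofReal c • (μ.restrict EA).map f := by
    rw [hmapA, ProbabilityTheory.cond, haxis, Measure.map_smul, smul_smul, hac,
      ENNReal.ofReal_mul ha0.le, mul_comm (ENNReal.ofReal a), mul_assoc,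
      ENNReal.mul_inv_cancel hane ENNReal.ofReal_ne_top, mul_one]
  have hKC : (ENNReal.ofReal ((1 - pA) * pC)) • κC.map gC =
      ENNReal.ofReal c • (μ.restrict EC).map f := by
    rw [hmapC, ProbabilityTheory.cond, hμEC, Measure.map_smul, smul_smul, ha'c,
      ENNReal.ofReal_mul (by linarith), mul_comm (ENNReal.ofReal (1-a)), mul_assoc,
      ENNReal.mul_inv_cancel ha'ne ENNReal.ofReal_ne_top, mul_one]
  have hK : (ENNReal.ofReal (pA * (1 - pC))) • κA.map gA +
      (ENNReal.ofReal ((1 - pA) * pC)) • κC.map gC =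
      ENNReal.ofReal c • μ.map f := by
    rw [hKA, hKC, ← smul_add, ← Measure.map_add _ _ hf,
      ← Measure.restrict_union hdisj mEC,
      Measure.restrict_congr_set (Filter.eventuallyEq_univ.mpr (mem_ae_iff.mpr hcompl0)),
      Measure.restrict_univ]
  -- uniform part vanishes on box2
  haveI hunif1 : IsProbabilityMeasure (volume.restrict (Set.Icc (0:ℝ) 1)) := by
    constructor
    simp [Real.volume_Icc]
  have hunifA : (Measure.pi fun _ : ιA => volume.restrict (Set.Icc (0:ℝ) 1)) (box2 ιA) = 0 := by
    set π := Measure.pi fun _ : ιA => volume.restrict (Set.Icc (0:ℝ) 1) with hπ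
    haveI : IsProbabilityMeasure π := by infer_instance
    have h1 : π (box1 ιA) = 1 := by
      have e : box1 ιA = Set.pi Set.univ (fun _ => Set.Icc (0:ℝ) 1) := by
        ext x; simp [box1, Set.mem_pi, Pi.le_def, forall_and]
      rw [e, hπ, Measure.pi_pi]
      simp [Real.volume_Icc]
    have h2 : π (box1 ιA)ᶜ = 0 := by
      rw [measure_compl (measurableSet_box1 ιA) (measure_ne_top _ _), h1, measure_univ,
        tsub_self]
    exact measure_mono_null (fun x hx => hx.2) h2
  have hunifC : (Measure.pi fun _ : ιC => volume.restrict (Set.Icc (0:ℝ) 1)) (box2 ιC) = 0 := by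
    set π := Measure.pi fun _ : ιC => volume.restrict (Set.Icc (0:ℝ) 1) with hπ
    have h1 : π (box1 ιC) = 1 := by
      have e : box1 ιC = Set.pi Set.univ (fun _ => Set.Icc (0:ℝ) 1) := by
        ext x; simp [box1, Set.mem_pi, Pi.le_def, forall_and]
      rw [e, hπ, Measure.pi_pi]
      simp [Real.volume_Icc]
    have h2 : π (box1 ιC)ᶜ = 0 := by
      rw [measure_compl (measurableSet_box1 ιC) (measure_ne_top _ _), h1, measure_univ,
        tsub_self]
    exact measure_mono_null (fun x hx => hx.2) h2
  -- restrictions of νA, νC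
  have hrA : νA.restrict (box2 ιA) = ENNReal.ofReal pA • κA := by
    rw [hνA, Measure.restrict_add, Measure.restrict_smul, Measure.restrict_smul,
      Measure.restrict_eq_zero.mpr hunifA, smul_zero, zero_add, hκArestrict]
  have hrC : νC.restrict (box2 ιC) = ENNReal.ofReal pC • κC := by
    rw [hνC, Measure.restrict_add, Measure.restrict_smul, Measure.restrict_smul,
      Measure.restrict_eq_zero.mpr hunifC, smul_zero, zero_add, hκCrestrict]
  -- Part 1
  have part1 : (ENNReal.ofReal c)⁻¹ •
      ((ENNReal.ofReal (1 - pC)) • ((νA.restrict (box2 ιA)).map gA) +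
        (ENNReal.ofReal (1 - pA)) • ((νC.restrict (box2 ιC)).map gC)) = μ.map f := by
    rw [hrA, hrC, Measure.map_smul, Measure.map_smul, smul_smul, smul_smul,
      ← ENNReal.ofReal_mul (by linarith), ← ENNReal.ofReal_mul (by linarith),
      mul_comm (1 - pC) pA, hK, smul_smul,
      ENNReal.inv_mul_cancel hcne ENNReal.ofReal_ne_top, one_smul]
  refine ⟨part1, ?_⟩
  -- Part 2: the construction witnessing outer independence
  set P1 : Measure (ιA → ℝ) :=
    ENNReal.ofReal (1 - pA) • Measure.dirac (fun _ => 0) + ENNReal.ofReal pA • κA with hP1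
  set P2 : Measure (ιC → ℝ) :=
    ENNReal.ofReal (1 - pC) • Measure.dirac (fun _ => 0) + ENNReal.ofReal pC • κC with hP2
  haveI : IsProbabilityMeasure P1 := by
    constructor
    rw [hP1]
    simp only [Measure.add_apply, Measure.smul_apply, measure_univ, smul_eq_mul, mul_one]
    rw [← ENNReal.ofReal_add (by linarith) hpA0.le]
    norm_num
  haveI : IsProbabilityMeasure P2 := by
    constructor
    rw [hP2]
    simp only [Measure.add_apply, Measure.smul_apply, measure_univ, smul_eq_mul, mul_one]
    rw [← ENNReal.ofReal_add (by linarith) hpC0.le]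
    norm_num
  refine ⟨(ιA → ℝ) × (ιC → ℝ), inferInstance, P1.prod P2, Prod.fst, Prod.snd,
    Set.univ, Set.univ, inferInstance, measurable_fst, measurable_snd, ?_, ?_, ?_, ?_⟩
  · intro p _; exact ⟨trivial, trivial⟩
  · simp
  · -- independence of the coordinates under the product measure
    rw [indepFun_iff_measure_inter_preimage_eq_mul]
    intro s t hs ht
    have e1 : (Prod.fst ⁻¹' s ∩ Prod.snd ⁻¹' t : Set ((ιA → ℝ) × (ιC → ℝ))) = s ×ˢ t :=
      (Set.prod_eq s t).symm
    have e2 : (Prod.fst ⁻¹' s : Set ((ιA → ℝ) × (ιC → ℝ))) = s ×ˢ Set.univ :=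
      (Set.prod_univ).symm
    have e3 : (Prod.snd ⁻¹' t : Set ((ιA → ℝ) × (ιC → ℝ))) = Set.univ ×ˢ t :=
      (Set.univ_prod).symm
    rw [e1, e2, e3, Measure.prod_prod, Measure.prod_prod, Measure.prod_prod,
      measure_univ, measure_univ, mul_one, one_mul]
  · -- conditional law of the coupling given `Ω` is the law of `Y`
    have hid : (fun ω : (ιA → ℝ) × (ιC → ℝ) => (ω.1, ω.2)) = id := rfl
    rw [hid, Set.preimage_id, Measure.map_id]
    have hdisjS : Disjoint (box2 ιA ×ˢ ({fun _ => 0} : Set (ιC → ℝ)))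
        (({fun _ => 0} : Set (ιA → ℝ)) ×ˢ box2 ιC) := by
      rw [Set.disjoint_left]
      rintro p ⟨h1, -⟩ ⟨h2, -⟩
      exact zero_not_mem_box2 ιA (h2 ▸ h1)
    have r1 : P1.restrict (box2 ιA) = ENNReal.ofReal pA • κA := by
      have hd : (Measure.dirac (fun _ => 0 : ιA → ℝ)).restrict (box2 ιA) = 0 := by
        rw [Measure.restrict_eq_zero, Measure.dirac_apply' _ (measurableSet_box2 ιA),
          Set.indicator_of_notMem (zero_not_mem_box2 ιA)]
      rw [hP1, Measure.restrict_add, Measure.restrict_smul, Measure.restrict_smul,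
        hκArestrict, hd, smul_zero, zero_add]
    have r2 : P2.restrict ({fun _ => 0} : Set (ιC → ℝ)) =
        ENNReal.ofReal (1 - pC) • Measure.dirac (fun _ => 0) := by
      have hd : (Measure.dirac (fun _ => 0 : ιC → ℝ)).restrict {fun _ => 0} =
          Measure.dirac (fun _ => 0) := by
        rw [Measure.restrict_congr_set (Filter.eventuallyEq_univ.mpr (mem_ae_iff.mpr ?_)),
          Measure.restrict_univ]
        rw [Measure.dirac_apply' _ (measurableSet_singleton _).compl,
          Set.indicator_of_notMem (by simp)]
      have hz : κC.restrict ({fun _ => 0} : Set (ιC → ℝ)) = 0 := by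
        rw [Measure.restrict_eq_zero]
        refine measure_mono_null ?_ hκCbox
        intro x hx
        rw [Set.mem_singleton_iff] at hx
        rw [hx]
        exact zero_not_mem_box2 ιC
      rw [hP2, Measure.restrict_add, Measure.restrict_smul, Measure.restrict_smul,
        hd, hz, smul_zero, add_zero]
    have r1' : P1.restrict ({fun _ => 0} : Set (ιA → ℝ)) =
        ENNReal.ofReal (1 - pA) • Measure.dirac (fun _ => 0) := by
      have hd : (Measure.dirac (fun _ => 0 : ιA → ℝ)).restrict {fun _ => 0} =
          Measure.dirac (fun _ => 0) := by
        rw [Measure.restrict_congr_set (Filter.eventuallyEq_univ.mpr (mem_ae_iff.mpr ?_)),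
          Measure.restrict_univ]
        rw [Measure.dirac_apply' _ (measurableSet_singleton _).compl,
          Set.indicator_of_notMem (by simp)]
      have hz : κA.restrict ({fun _ => 0} : Set (ιA → ℝ)) = 0 := by
        rw [Measure.restrict_eq_zero]
        refine measure_mono_null ?_ hκAbox
        intro x hx
        rw [Set.mem_singleton_iff] at hx
        rw [hx]
        exact zero_not_mem_box2 ιA
      rw [hP1, Measure.restrict_add, Measure.restrict_smul, Measure.restrict_smul,
        hd, hz, smul_zero, add_zero]
    have r2' : P2.restrict (box2 ιC) = ENNReal.ofReal pC • κC := by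
      have hd : (Measure.dirac (fun _ => 0 : ιC → ℝ)).restrict (box2 ιC) = 0 := by
        rw [Measure.restrict_eq_zero, Measure.dirac_apply' _ (measurableSet_box2 ιC),
          Set.indicator_of_notMem (zero_not_mem_box2 ιC)]
      rw [hP2, Measure.restrict_add, Measure.restrict_smul, Measure.restrict_smul,
        hκCrestrict, hd, smul_zero, zero_add]
    have hres1 : (P1.prod P2).restrict (box2 ιA ×ˢ ({fun _ => 0} : Set (ιC → ℝ))) =
        ENNReal.ofReal (pA * (1 - pC)) • κA.map gA := by
      rw [← Measure.prod_restrict, r1, r2,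
        prod_smul_smul _ _ ENNReal.ofReal_ne_top, Measure.prod_dirac,
        ← ENNReal.ofReal_mul hpA0.le]
    have hres2 : (P1.prod P2).restrict (({fun _ => 0} : Set (ιA → ℝ)) ×ˢ box2 ιC) =
        ENNReal.ofReal ((1 - pA) * pC) • κC.map gC := by
      rw [← Measure.prod_restrict, r1', r2',
        prod_smul_smul _ _ ENNReal.ofReal_ne_top, Measure.dirac_prod,
        ← ENNReal.ofReal_mul (by linarith)]
    have hresOm : (P1.prod P2).restrict (omAxes ιA ιC) =
        ENNReal.ofReal (pA * (1 - pC)) • κA.map gA +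
          ENNReal.ofReal ((1 - pA) * pC) • κC.map gC := by
      rw [omAxes,
        Measure.restrict_union hdisjS ((measurableSet_singleton _).prod (measurableSet_box2 ιC)),
        hres1, hres2]
    haveI : IsProbabilityMeasure (κA.map gA) := Measure.isProbabilityMeasure_map hgAm.aemeasurable
    haveI : IsProbabilityMeasure (κC.map gC) := Measure.isProbabilityMeasure_map hgCm.aemeasurable
    have hPOm : (P1.prod P2) (omAxes ιA ιC) = ENNReal.ofReal c := by
      have h := congrArg (fun m : Measure ((ιA → ℝ) × (ιC → ℝ)) => m Set.univ) hresOm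
      simp only [Measure.restrict_apply_univ, Measure.add_apply, Measure.smul_apply,
        measure_univ, smul_eq_mul, mul_one] at h
      rw [h, ← ENNReal.ofReal_add (by nlinarith) (by nlinarith)]
    rw [ProbabilityTheory.cond, hPOm, hresOm, hK, smul_smul,
      ENNReal.inv_mul_cancel hcne ENNReal.ofReal_ne_top, one_smul]

end
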